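/- (Proposition 21.4, order-2 normal forms in the non-parallel case, existence) If q₁ and q₂ are real binary quadratic forms that are linearly independent over ℝ, then there exist an invertible 2×2 real matrix A, an invertible 2×2 real matrix D = (dᵢⱼ), and ε ∈ {−1, 0, 1} such that for all v = (v₁, v₂) ∈ ℝ²: d₁₁·q₁(A·v) + d₁₂·q₂(A·v) = v₁·v₂ and d₂₁·q₁(A·v) + d₂₂·q₂(A·v) = v₁² + ε·v₂². -/

import Mathlib

def Concl (q₁ q₂ : ℝ → ℝ → ℝ) : Prop :=
  ∃ (A D : Matrix (Fin 2) (Fin 2) ℝ) (ε : ℝ),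
      A.det ≠ 0 ∧ D.det ≠ 0 ∧ (ε = -1 ∨ ε = 0 ∨ ε = 1) ∧
      ∀ x y : ℝ,
        D 0 0 * q₁ (A 0 0 * x + A 0 1 * y) (A 1 0 * x + A 1 1 * y)
            + D 0 1 * q₂ (A 0 0 * x + A 0 1 * y) (A 1 0 * x + A 1 1 * y) = x * y ∧
        D 1 0 * q₁ (A 0 0 * x + A 0 1 * y) (A 1 0 * x + A 1 1 * y)
            + D 1 1 * q₂ (A 0 0 * x + A 0 1 * y) (A 1 0 * x + A 1 1 * y)
          = x ^ 2 + ε * y ^ 2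

lemma solve2 (A : Matrix (Fin 2) (Fin 2) ℝ) (hA : A.det ≠ 0) (X Y : ℝ) :
    ∃ x y : ℝ, A 0 0 * x + A 0 1 * y = X ∧ A 1 0 * x + A 1 1 * y = Y := by
  rw [Matrix.det_fin_two] at hA
  refine ⟨(A 1 1 * X - A 0 1 * Y)/(A 0 0 * A 1 1 - A 0 1 * A 1 0),
      (-(A 1 0) * X + A 0 0 * Y)/(A 0 0 * A 1 1 - A 0 1 * A 1 0), ?_, ?_⟩ <;>
    (rw [mul_div_assoc', mul_div_assoc', ← add_div, div_eq_iff hA]; ring)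

lemma comp (q₁ q₂ : ℝ → ℝ → ℝ) (B : Matrix (Fin 2) (Fin 2) ℝ) (hB : B.det ≠ 0)
    (h : Concl (fun x y => q₁ (B 0 0 * x + B 0 1 * y) (B 1 0 * x + B 1 1 * y))
               (fun x y => q₂ (B 0 0 * x + B 0 1 * y) (B 1 0 * x + B 1 1 * y))) :
    Concl q₁ q₂ := by
  obtain ⟨A, D, ε, hA, hD, hε, hpt⟩ := h
  refine ⟨B * A, D, ε, by simp [Matrix.det_mul]; exact ⟨fun h => absurd h hB, fun h => absurd h hA⟩, hD, hε, ?_⟩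
  intro x y
  have h1 := hpt x y
  simp only [Matrix.mul_apply, Fin.sum_univ_two] at *
  constructor
  · have := h1.1
    convert this using 3 <;> ring_nf
  · have := h1.2
    convert this using 3 <;> ring_nf


lemma normSq (α β γ : ℝ) (h : 0 < β^2 - 4*α*γ) :
    ∃ A : Matrix (Fin 2) (Fin 2) ℝ, A.det ≠ 0 ∧
      ∀ x y : ℝ, α*(A 0 0*x + A 0 1*y)^2 + β*(A 0 0*x + A 0 1*y)*(A 1 0*x + A 1 1*y)
        + γ*(A 1 0*x + A 1 1*y)^2 = x*y := by
  set s := Real.sqrt (β^2 - 4*α*γ) with hsdef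
  have hs0 : 0 < s := Real.sqrt_pos.mpr h
  have hs : s^2 = β^2 - 4*α*γ := Real.sq_sqrt h.le
  by_cases hα : α = 0
  · have hβ : β ≠ 0 := by intro hb; rw [hα, hb] at h; nlinarith
    refine ⟨!![1/β, -γ/β; 0, 1], ?_, ?_⟩
    · rw [Matrix.det_fin_two_of]
      field_simp
      simp [hβ]
    · intro x y
      simp only [Matrix.of_apply, Matrix.cons_val', Matrix.cons_val_zero, Matrix.cons_val_one, Matrix.head_cons,
        Matrix.empty_val', Matrix.cons_val_fin_one, Matrix.head_fin_const]
      rw [hα]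
      field_simp
      ring
  · refine ⟨!![(β+s)/(2*α*s), (s-β)/(2*s); -(1/s), α/s], ?_, ?_⟩
    · rw [Matrix.det_fin_two_of]
      have : (β+s)/(2*α*s) * (α/s) - (s-β)/(2*s) * (-(1/s)) = 1/s := by
        field_simp
        ring
      rw [this]
      exact one_div_ne_zero hs0.ne'
    · intro x y
      simp only [Matrix.of_apply, Matrix.cons_val', Matrix.cons_val_zero, Matrix.cons_val_one, Matrix.head_cons,
        Matrix.empty_val', Matrix.cons_val_fin_one, Matrix.head_fin_const]
      have l3 : ∀ X Y : ℝ, α*X^2 + β*X*Y + γ*Y^2 = (α*X + (β-s)/2*Y) * (X + (β+s)/(2*α)*Y) := by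
        intro X Y
        field_simp
        linear_combination (Y^2) * hs
      set X := (β+s)/(2*α*s)*x + (s-β)/(2*s)*y with hX
      set Y := -(1/s)*x + α/s*y with hY
      have l1 : α*X + (β-s)/2*Y = x := by
        rw [hX, hY]; field_simp; ring
      have l2 : X + (β+s)/(2*α)*Y = y := by
        rw [hX, hY]; field_simp; ring
      rw [l3, l1, l2]

lemma base (q₁ q₂ : ℝ → ℝ → ℝ) (c d c' d' a b g : ℝ) (ha : a ≠ 0)
    (hdet : c * d' - d * c' ≠ 0)
    (hp : ∀ x y : ℝ, c * q₁ x y + d * q₂ x y = x * y)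
    (hq : ∀ x y : ℝ, c' * q₁ x y + d' * q₂ x y = a * x^2 + b * (x*y) + g * y^2) :
    Concl q₁ q₂ := by
  set l : ℝ := if 0 < a then 1 else -1 with hl
  have hla : l * a = |a| := by
    rcases lt_trichotomy a 0 with h1 | h1 | h1
    · rw [hl, if_neg (by linarith), abs_of_neg h1]; ring
    · exact absurd h1 ha
    · rw [hl, if_pos h1, abs_of_pos h1]; ring
  have hl0 : l ≠ 0 := by
    by_cases h1 : 0 < a
    · rw [hl, if_pos h1]; norm_num
    · rw [hl, if_neg h1]; norm_num
  have haabs : 0 < |a| := abs_pos.mpr ha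
  set s : ℝ := (Real.sqrt |a|)⁻¹ with hsdef
  have hs0 : s ≠ 0 := inv_ne_zero (Real.sqrt_pos.mpr haabs).ne'
  have hs : l * a * s^2 = 1 := by
    rw [hla, hsdef, inv_pow, Real.sq_sqrt (abs_nonneg a)]
    exact mul_inv_cancel₀ haabs.ne'
  set t : ℝ := if g = 0 then 1 else (Real.sqrt |g|)⁻¹ with ht
  have ht0 : t ≠ 0 := by
    by_cases hg : g = 0
    · rw [ht, if_pos hg]; norm_num
    · rw [ht, if_neg hg]
      exact inv_ne_zero (Real.sqrt_pos.mpr (abs_pos.mpr hg)).ne'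
  have hε : l * g * t^2 = -1 ∨ l * g * t^2 = 0 ∨ l * g * t^2 = 1 := by
    by_cases hg : g = 0
    · right; left; rw [hg]; ring
    · have h2 : g * t^2 = g / |g| := by
        rw [ht, if_neg hg, inv_pow, Real.sq_sqrt (abs_nonneg g), div_eq_mul_inv]
      rcases lt_trichotomy g 0 with h1 | h1 | h1
      · have h4 : g / |g| = -1 := by rw [abs_of_neg h1, div_neg, div_self hg]
        rcases lt_trichotomy a 0 with h3 | h3 | h3
        · right; right
          rw [mul_assoc, h2, h4, hl, if_neg (by linarith)]; ring
        · exact absurd h3 ha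
        · left
          rw [mul_assoc, h2, h4, hl, if_pos h3]; ring
      · exact absurd h1 hg
      · have h4 : g / |g| = 1 := by rw [abs_of_pos h1, div_self hg]
        rcases lt_trichotomy a 0 with h3 | h3 | h3
        · left
          rw [mul_assoc, h2, h4, hl, if_neg (by linarith)]; ring
        · exact absurd h3 ha
        · right; right
          rw [mul_assoc, h2, h4, hl, if_pos h3]; ring
  refine ⟨!![s, 0; 0, t], !![c/(s*t), d/(s*t); l*c' - l*b*c, l*d' - l*b*d], l*g*t^2,
      ?_, ?_, hε, ?_⟩
  · rw [Matrix.det_fin_two_of]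
    simpa using mul_ne_zero hs0 ht0
  · rw [Matrix.det_fin_two_of]
    have : c/(s*t) * (l*d' - l*b*d) - d/(s*t) * (l*c' - l*b*c) = l*(c*d' - d*c')/(s*t) := by
      field_simp; ring
    rw [this]
    exact div_ne_zero (mul_ne_zero hl0 hdet) (mul_ne_zero hs0 ht0)
  · intro x y
    simp only [Matrix.of_apply, Matrix.cons_val', Matrix.cons_val_zero, Matrix.cons_val_one,
      Matrix.head_cons, Matrix.empty_val', Matrix.cons_val_fin_one, Matrix.head_fin_const]
    rw [show s*x + 0*y = s*x by ring, show 0*x + t*y = t*y by ring]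
    constructor
    · field_simp
      linear_combination hp (s*x) (t*y)
    · linear_combination l * hq (s*x) (t*y) - l*b* hp (s*x) (t*y) + x^2 * hs

lemma stage2 (r₁ r₂ : ℝ → ℝ → ℝ) (c d : ℝ)
    (h₁ : ∃ a b g : ℝ, ∀ x y : ℝ, r₁ x y = a*x^2 + b*(x*y) + g*y^2)
    (h₂ : ∃ a b g : ℝ, ∀ x y : ℝ, r₂ x y = a*x^2 + b*(x*y) + g*y^2)
    (hind : ∀ u v : ℝ, (∀ x y : ℝ, u * r₁ x y + v * r₂ x y = 0) → u = 0 ∧ v = 0)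
    (hp : ∀ x y : ℝ, c * r₁ x y + d * r₂ x y = x * y) : Concl r₁ r₂ := by
  obtain ⟨a₁, b₁, g₁, e₁⟩ := h₁
  obtain ⟨a₂, b₂, g₂, e₂⟩ := h₂
  have hcd : c^2 + d^2 ≠ 0 := by
    intro h0
    have hc : c = 0 := by nlinarith [sq_nonneg c, sq_nonneg d]
    have hd : d = 0 := by nlinarith [sq_nonneg c, sq_nonneg d]
    have h1 := hp 1 1
    rw [hc, hd] at h1
    norm_num at h1
  have hdet : c * c - d * (-d) ≠ 0 := by
    have : c * c - d * (-d) = c^2 + d^2 := by ring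
    rw [this]; exact hcd
  set a := -d*a₁ + c*a₂ with hadef
  set b := -d*b₁ + c*b₂ with hbdef
  set g := -d*g₁ + c*g₂ with hgdef
  have hq : ∀ x y : ℝ, (-d) * r₁ x y + c * r₂ x y = a*x^2 + b*(x*y) + g*y^2 := by
    intro x y; rw [e₁ x y, e₂ x y]; ring
  have h0 : ¬(a = 0 ∧ g = 0) := by
    rintro ⟨ha, hg⟩
    have hz : ∀ x y : ℝ, (-d - b*c) * r₁ x y + (c - b*d) * r₂ x y = 0 := by
      intro x y
      linear_combination hq x y - b * hp x y + x^2 * ha + y^2 * hg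
    obtain ⟨hu, hv⟩ := hind _ _ hz
    exact hcd (by linear_combination c * hv - d * hu)
  by_cases hA : a ≠ 0
  · exact base r₁ r₂ c d (-d) c a b g hA hdet hp hq
  · push_neg at hA
    have hg : g ≠ 0 := fun hgz => h0 ⟨hA, hgz⟩
    apply comp r₁ r₂ !![0, 1; 1, 0] (by rw [Matrix.det_fin_two_of]; norm_num)
    apply base _ _ c d (-d) c g b a hg hdet
    · intro x y
      simp only [Matrix.of_apply, Matrix.cons_val', Matrix.cons_val_zero, Matrix.cons_val_one,
        Matrix.head_cons, Matrix.empty_val', Matrix.cons_val_fin_one, Matrix.head_fin_const]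
      rw [show (0:ℝ)*x + 1*y = y by ring, show (1:ℝ)*x + 0*y = x by ring]
      linear_combination hp y x
    · intro x y
      simp only [Matrix.of_apply, Matrix.cons_val', Matrix.cons_val_zero, Matrix.cons_val_one,
        Matrix.head_cons, Matrix.empty_val', Matrix.cons_val_fin_one, Matrix.head_fin_const]
      rw [show (0:ℝ)*x + 1*y = y by ring, show (1:ℝ)*x + 0*y = x by ring]
      linear_combination hq y x

/-- **Proposition 21.4** (existence part). A linearly independent pair of real binary
quadratic forms can be normalized, by an invertible linear change of variables and an
invertible linear recombination, to one of `(xy, x²)`, `(xy, x² + y²)`, `(xy, x² − y²)`. -/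
theorem prop_21_4
    (q₁ q₂ : ℝ → ℝ → ℝ)
    (hq₁ : ∃ α β γ : ℝ, ∀ x y : ℝ, q₁ x y = α * x ^ 2 + β * x * y + γ * y ^ 2)
    (hq₂ : ∃ α β γ : ℝ, ∀ x y : ℝ, q₂ x y = α * x ^ 2 + β * x * y + γ * y ^ 2)
    (hind : ∀ c d : ℝ, (∀ x y : ℝ, c * q₁ x y + d * q₂ x y = 0) → c = 0 ∧ d = 0) :
    ∃ (A D : Matrix (Fin 2) (Fin 2) ℝ) (ε : ℝ),
      A.det ≠ 0 ∧ D.det ≠ 0 ∧ (ε = -1 ∨ ε = 0 ∨ ε = 1) ∧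
      ∀ x y : ℝ,
        D 0 0 * q₁ (A 0 0 * x + A 0 1 * y) (A 1 0 * x + A 1 1 * y)
            + D 0 1 * q₂ (A 0 0 * x + A 0 1 * y) (A 1 0 * x + A 1 1 * y) = x * y ∧
        D 1 0 * q₁ (A 0 0 * x + A 0 1 * y) (A 1 0 * x + A 1 1 * y)
            + D 1 1 * q₂ (A 0 0 * x + A 0 1 * y) (A 1 0 * x + A 1 1 * y)
          = x ^ 2 + ε * y ^ 2 := by
  obtain ⟨α₁, β₁, γ₁, e₁⟩ := hq₁
  obtain ⟨α₂, β₂, γ₂, e₂⟩ := hq₂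
  have key : ∃ c d : ℝ,
      0 < (c*β₁+d*β₂)^2 - 4*(c*α₁+d*α₂)*(c*γ₁+d*γ₂) := by
    by_cases hα1 : α₁ = 0
    · subst hα1
      by_cases hβ1 : β₁ = 0
      · subst hβ1
        have hγ1 : γ₁ ≠ 0 := by
          intro h0
          subst h0
          have hz : ∀ x y : ℝ, (1:ℝ) * q₁ x y + 0 * q₂ x y = 0 := by
            intro x y; rw [e₁ x y]; ring
          have h1 := (hind 1 0 hz).1
          norm_num at h1
        by_cases hα2 : α₂ = 0
        · subst hα2
          by_cases hβ2 : β₂ = 0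
          · subst hβ2
            exfalso
            have hz : ∀ x y : ℝ, γ₂ * q₁ x y + (-γ₁) * q₂ x y = 0 := by
              intro x y; rw [e₁ x y, e₂ x y]; ring
            have h1 := (hind _ _ hz).2
            exact hγ1 (neg_eq_zero.mp h1)
          · refine ⟨0, 1, ?_⟩
            have h3 : 0 < β₂^2 := by rcases (Ne.lt_or_gt hβ2) with h | h <;> nlinarith
            nlinarith [h3]
        · set cc := ((β₂^2 - 4*α₂*γ₂) - 1)/(4*α₂*γ₁) with hccdef
          refine ⟨cc, 1, ?_⟩
          have hcc : cc * (4*α₂*γ₁) = (β₂^2 - 4*α₂*γ₂) - 1 :=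
            div_mul_cancel₀ _ (mul_ne_zero (by simpa using hα2) hγ1)
          have h2 : (cc*0+1*β₂)^2 - 4*(cc*0+1*α₂)*(cc*γ₁+1*γ₂) = 1 := by
            linear_combination -hcc
          rw [h2]
          norm_num
      · refine ⟨1, 0, ?_⟩
        have h3 : 0 < β₁^2 := by rcases (Ne.lt_or_gt hβ1) with h | h <;> nlinarith
        nlinarith [h3]
    · by_cases hm1 : α₁*β₂ - α₂*β₁ = 0
      · have hm2 : α₁*γ₂ - α₂*γ₁ ≠ 0 := by
          intro hm2
          have hz : ∀ x y : ℝ, (-α₂) * q₁ x y + α₁ * q₂ x y = 0 := by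
            intro x y; rw [e₁ x y, e₂ x y]
            linear_combination (x*y) * hm1 + y^2 * hm2
          exact hα1 (hind _ _ hz).2
        set e := ((β₁^2 - 4*α₁*γ₁) - 1)/(4*α₁*(α₁*γ₂ - α₂*γ₁)) with hedef
        refine ⟨1 - e*α₂, e*α₁, ?_⟩
        have hee : e * (4*α₁*(α₁*γ₂ - α₂*γ₁)) = (β₁^2 - 4*α₁*γ₁) - 1 :=
          div_mul_cancel₀ _ (mul_ne_zero (by simpa using hα1) hm2)
        have h2 : ((1-e*α₂)*β₁+e*α₁*β₂)^2
            - 4*((1-e*α₂)*α₁+e*α₁*α₂)*((1-e*α₂)*γ₁+e*α₁*γ₂) = 1 := by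
          linear_combination (2*β₁*e + e^2*(α₁*β₂ - α₂*β₁)) * hm1 - hee
        rw [h2]
        norm_num
      · refine ⟨-α₂, α₁, ?_⟩
        have h3 : 0 < (α₁*β₂ - α₂*β₁)^2 := by
          rcases (Ne.lt_or_gt hm1) with h | h <;> nlinarith
        have h2 : (-α₂*β₁+α₁*β₂)^2 - 4*(-α₂*α₁+α₁*α₂)*(-α₂*γ₁+α₁*γ₂)
            = (α₁*β₂ - α₂*β₁)^2 := by ring
        rw [h2]
        exact h3
  obtain ⟨c, d, hdisc⟩ := key
  obtain ⟨A₀, hA₀, hN⟩ := normSq (c*α₁+d*α₂) (c*β₁+d*β₂) (c*γ₁+d*γ₂) hdisc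
  have main : Concl q₁ q₂ := by
    apply comp q₁ q₂ A₀ hA₀
    apply stage2 _ _ c d
    · exact ⟨α₁*(A₀ 0 0)^2 + β₁*(A₀ 0 0)*(A₀ 1 0) + γ₁*(A₀ 1 0)^2,
        2*α₁*(A₀ 0 0)*(A₀ 0 1) + β₁*((A₀ 0 0)*(A₀ 1 1)+(A₀ 0 1)*(A₀ 1 0))
          + 2*γ₁*(A₀ 1 0)*(A₀ 1 1),
        α₁*(A₀ 0 1)^2 + β₁*(A₀ 0 1)*(A₀ 1 1) + γ₁*(A₀ 1 1)^2,
        fun x y => by rw [e₁]; ring⟩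
    · exact ⟨α₂*(A₀ 0 0)^2 + β₂*(A₀ 0 0)*(A₀ 1 0) + γ₂*(A₀ 1 0)^2,
        2*α₂*(A₀ 0 0)*(A₀ 0 1) + β₂*((A₀ 0 0)*(A₀ 1 1)+(A₀ 0 1)*(A₀ 1 0))
          + 2*γ₂*(A₀ 1 0)*(A₀ 1 1),
        α₂*(A₀ 0 1)^2 + β₂*(A₀ 0 1)*(A₀ 1 1) + γ₂*(A₀ 1 1)^2,
        fun x y => by rw [e₂]; ring⟩
    · intro u v h
      refine hind u v fun X Y => ?_
      obtain ⟨x, y, hx, hy⟩ := solve2 A₀ hA₀ X Y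
      rw [← hx, ← hy]
      exact h x y
    · intro x y
      rw [e₁, e₂]
      linear_combination hN x y
  exact main
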